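/- For t ≥ 2 and n ≥ t, the quantity 2^{n−1} − (1/2)·∑_{j=1}^{2t} α_j^n, where α_j ranges over the roots of x^{2t} − 2^t, equals 2^{n−1} − t·2^{n/2} when 2t ∣ n, and equals 2^{n−1} otherwise; in particular it is a nonnegative integer. -/

import Mathlib

open Polynomial in
theorem weight_value_from_roots (t : ℕ) (ht : 2 ≤ t) (n : ℕ) (hn : t ≤ n) :
    ((2 * t ∣ n →
      (2 : ℂ) ^ (n - 1) - (1 / 2) *
          ((((X : ℂ[X]) ^ (2 * t) - C (2 ^ t)).roots.map (fun a => a ^ n)).sum)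
        = 2 ^ (n - 1) - (t : ℂ) * 2 ^ (n / 2)) ∧
    (¬ (2 * t ∣ n) →
      (2 : ℂ) ^ (n - 1) - (1 / 2) *
          ((((X : ℂ[X]) ^ (2 * t) - C (2 ^ t)).roots.map (fun a => a ^ n)).sum)
        = 2 ^ (n - 1))) ∧
    ∃ k : ℕ, (2 : ℂ) ^ (n - 1) - (1 / 2) *
        ((((X : ℂ[X]) ^ (2 * t) - C (2 ^ t)).roots.map (fun a => a ^ n)).sum) = k := by
  have hm0 : (2 * t : ℕ) ≠ 0 := by omega
  obtain ⟨ζ, hζ⟩ : ∃ ζ : ℂ, IsPrimitiveRoot ζ (2 * t) :=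
    ⟨_, Complex.isPrimitiveRoot_exp _ hm0⟩
  set α : ℂ := (Real.sqrt 2 : ℂ) with hαdef
  have hα2 : α ^ 2 = 2 := by
    rw [hαdef, ← Complex.ofReal_pow, Real.sq_sqrt (by norm_num)]
    norm_num
  have hα : α ^ (2 * t) = (2 : ℂ) ^ t := by
    rw [pow_mul, hα2]
  have hroots : ((X : ℂ[X]) ^ (2 * t) - C (2 ^ t)).roots
      = (Multiset.range (2 * t)).map (fun k => ζ ^ k * α) := by
    have := hζ.nthRoots_eq hα
    rwa [nthRoots] at this
  have hsum : ((((X : ℂ[X]) ^ (2 * t) - C (2 ^ t)).roots.map (fun a => a ^ n)).sum)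
      = α ^ n * ∑ k ∈ Finset.range (2 * t), (ζ ^ n) ^ k := by
    rw [hroots, Multiset.map_map]
    rw [Finset.mul_sum]
    rw [Finset.sum, Finset.range_val]
    congr 1
    apply Multiset.map_congr rfl
    intro k _
    simp only [Function.comp_apply]
    rw [mul_pow, ← pow_mul, ← pow_mul, mul_comm k n]
    ring
  have hζ1 : ζ ^ (2 * t) = 1 := hζ.pow_eq_one
  have hdvd : 2 * t ∣ n →
      (2 : ℂ) ^ (n - 1) - (1 / 2) *
          ((((X : ℂ[X]) ^ (2 * t) - C (2 ^ t)).roots.map (fun a => a ^ n)).sum)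
        = 2 ^ (n - 1) - (t : ℂ) * 2 ^ (n / 2) := by
    intro h
    have hζn : ζ ^ n = 1 := hζ.pow_eq_one_iff_dvd n |>.mpr h
    have h2' : 2 ∣ n := dvd_trans ⟨t, rfl⟩ h
    have h2 : n = 2 * (n / 2) := by omega
    have hαn : α ^ n = (2 : ℂ) ^ (n / 2) := by
      conv_lhs => rw [h2, pow_mul, hα2]
    rw [hsum, hζn, hαn]
    simp only [one_pow, Finset.sum_const, Finset.card_range, nsmul_eq_mul]
    push_cast
    ring
  have hndvd : ¬ (2 * t ∣ n) →
      (2 : ℂ) ^ (n - 1) - (1 / 2) *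
          ((((X : ℂ[X]) ^ (2 * t) - C (2 ^ t)).roots.map (fun a => a ^ n)).sum)
        = 2 ^ (n - 1) := by
    intro h
    have hζn : ζ ^ n ≠ 1 := fun hc => h ((hζ.pow_eq_one_iff_dvd n).mp hc)
    have : ∑ k ∈ Finset.range (2 * t), (ζ ^ n) ^ k = 0 := by
      rw [geom_sum_eq hζn, ← pow_mul, mul_comm n (2 * t), pow_mul, hζ1, one_pow, sub_self,
        zero_div]
    rw [hsum, this, mul_zero, mul_zero, sub_zero]
  refine ⟨⟨hdvd, hndvd⟩, ?_⟩
  by_cases h : 2 * t ∣ n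
  · refine ⟨2 ^ (n - 1) - t * 2 ^ (n / 2), ?_⟩
    rw [hdvd h]
    have hn2t : 2 * t ≤ n := Nat.le_of_dvd (by omega) h
    have hle : t * 2 ^ (n / 2) ≤ 2 ^ (n - 1) := by
      have ht2 : t ≤ 2 ^ (t - 1) := by
        calc t = t - 1 + 1 := by omega
        _ ≤ 2 ^ (t - 1) := Nat.succ_le_of_lt (Nat.lt_two_pow_self (n := t - 1))
      calc t * 2 ^ (n / 2) ≤ 2 ^ (t - 1) * 2 ^ (n / 2) := by
            exact Nat.mul_le_mul_right _ ht2
        _ = 2 ^ (t - 1 + n / 2) := by rw [pow_add]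
        _ ≤ 2 ^ (n - 1) := Nat.pow_le_pow_right (by norm_num) (by omega)
    push_cast [Nat.cast_sub hle]
    ring
  · exact ⟨2 ^ (n - 1), by rw [hndvd h]; push_cast; ring⟩
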